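/- Fix constants ψ > 0, D > 0, P_max > 0, f_max > 0, κ > 0, ζ > 0, f_b > 0, t_p > 0, n_p > 0, η > 0, ε ∈ (0,1), ϱ ∈ (0,1), Q_max > 1, and E_max > 0. For f > 0 and Q ∈ [1, Q_max], define the energy E(f, Q) = P_max·(e^{ψQ} − e^{ψ})·D·f²/f_max³ + D/((1−ε)·Q·η), and define the latency quantile L(f, Q) = inf{ t ∈ ℝ : P(T(f,Q) ≤ t) ≥ ϱ }, where T(f,Q) = (1 + ζ f/f_b)·X + G, with X and G independent, X Gamma-distributed with shape κ and rate κ f/((e^{ψQ} − e^{ψ})·D), and G Gaussian-distributed with mean N(Q)·t_p/(1−ε) and variance N(Q)·t_p²·ε/(1−ε)², where N(Q) = D/(Q·n_p). Suppose (f*, Q*) minimizes L over the feasible set {(f,Q) : 0 < f ≤ f_max, 1 ≤ Q ≤ Q_max, E(f,Q) ≤ E_max}, and suppose Q* > 1. Then either f* = f_max or E(f*, Q*) = E_max; in the latter case f* = √( (E_max − D/((1−ε)·Q*·η)) · f_max³ / ((e^{ψQ*} − e^{ψ})·D·P_max) ). -/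

import Mathlib

open MeasureTheory ProbabilityTheory Set

open Filter Topology
open scoped ENNReal NNReal

/-- Total (compression + communication) energy in the power-constrained scenario:
`E(f, Q) = P_max (e^{ψQ} − e^{ψ}) D f² / f_max³ + D / ((1−ε) Q η)`. -/
noncomputable def energyPC (ψ D Pmax fmax η ε f Q : ℝ) : ℝ :=
  Pmax * (Real.exp (ψ * Q) - Real.exp ψ) * D * f ^ 2 / fmax ^ 3 +
    D / ((1 - ε) * Q * η)

/-- The distribution of the end-to-end latency
`T(f,Q) = (1 + ζ f / f_b) X + G`, where `X` and `G` are independent,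
`X ~ Gamma(κ, κ f / ((e^{ψQ} − e^{ψ}) D))` and
`G ~ N(N(Q) t_p / (1−ε), N(Q) t_p² ε / (1−ε)²)` with `N(Q) = D / (Q n_p)`. -/
noncomputable def latencyDistPC (ψ D κ ζ fb tp np ε f Q : ℝ) : Measure ℝ :=
  Measure.map (fun p : ℝ × ℝ => (1 + ζ * f / fb) * p.1 + p.2)
    ((gammaMeasure κ (κ * f / ((Real.exp (ψ * Q) - Real.exp ψ) * D))).prod
      (gaussianReal ((D / (Q * np)) * tp / (1 - ε))
        (Real.toNNReal ((D / (Q * np)) * tp ^ 2 * ε / (1 - ε) ^ 2))))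

/-- The `ϱ`-quantile of the end-to-end latency:
`L(f,Q) = inf { t : ℝ | P(T(f,Q) ≤ t) ≥ ϱ }`. -/
noncomputable def latencyQuantilePC (ψ D κ ζ fb tp np ε ϱ f Q : ℝ) : ℝ :=
  sInf {t : ℝ | ENNReal.ofReal ϱ ≤ latencyDistPC ψ D κ ζ fb tp np ε f Q (Iic t)}

/-! ### Auxiliary lemmas -/

lemma gammaPDFReal_scale {a r s : ℝ} (hr : 0 < r) (hs : 0 < s) (u : ℝ) :
    gammaPDFReal a (r * s) u = s * gammaPDFReal a r (s * u) := by
  unfold gammaPDFReal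
  rcases le_or_gt 0 u with hu | hu
  · rw [if_pos hu, if_pos (by positivity : (0:ℝ) ≤ s * u)]
    rw [Real.mul_rpow hr.le hs.le, Real.mul_rpow hs.le hu]
    have hsa : s ^ a = s * s ^ (a - 1) := by
      nth_rewrite 2 [← Real.rpow_one s]
      rw [← Real.rpow_add hs]; ring_nf
    rw [hsa]; ring
  · rw [if_neg (not_le.mpr hu), if_neg (not_le.mpr (by nlinarith)), mul_zero]

lemma measurable_gammaPDF' (a r : ℝ) : Measurable (gammaPDF a r) :=
  (measurable_gammaPDFReal a r).ennreal_ofReal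

lemma measurable_N_Iic (N : Measure ℝ) (t c : ℝ) :
    Measurable fun u => N (Iic (t - c * u)) := by
  have hmono : Monotone fun s : ℝ => N (Iic s) :=
    fun x y hxy => measure_mono (Iic_subset_Iic.mpr hxy)
  exact hmono.measurable.comp (measurable_const.sub (measurable_id.const_mul c))

lemma map_prod_apply (c : ℝ) (γ N : Measure ℝ) [SFinite N] {S : Set ℝ}
    (hS : MeasurableSet S) :
    Measure.map (fun p : ℝ × ℝ => c * p.1 + p.2) (γ.prod N) S
      = ∫⁻ u, N {y | c * u + y ∈ S} ∂γ := by
  have hφ : Measurable (fun p : ℝ × ℝ => c * p.1 + p.2) :=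
    (measurable_fst.const_mul c).add measurable_snd
  rw [Measure.map_apply hφ hS, Measure.prod_apply (hφ hS)]
  rfl

lemma cdf_formula (a r c : ℝ) (N : Measure ℝ) [SFinite N] (t : ℝ) :
    Measure.map (fun p : ℝ × ℝ => c * p.1 + p.2) ((gammaMeasure a r).prod N) (Iic t)
      = ∫⁻ u, gammaPDF a r u * N (Iic (t - c * u)) := by
  rw [map_prod_apply c _ N measurableSet_Iic]
  have h1 : ∀ u : ℝ, {y | c * u + y ∈ Iic t} = Iic (t - c * u) := by
    intro u; ext y; simp only [mem_setOf_eq, mem_Iic]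
    constructor <;> intro <;> linarith
  simp_rw [h1]
  rw [gammaMeasure, lintegral_withDensity_eq_lintegral_mul _ (measurable_gammaPDF' a r)
    (measurable_N_Iic N t c)]
  rfl

lemma singleton_formula (a r c : ℝ) (N : Measure ℝ) [SFinite N]
    (hN : ∀ x : ℝ, N {x} = 0) (x : ℝ) :
    Measure.map (fun p : ℝ × ℝ => c * p.1 + p.2) ((gammaMeasure a r).prod N) {x} = 0 := by
  rw [map_prod_apply c _ N (measurableSet_singleton x)]
  have h1 : ∀ u : ℝ, {y | c * u + y ∈ ({x} : Set ℝ)} = {x - c * u} := by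
    intro u; ext y; simp only [mem_setOf_eq, mem_singleton_iff]
    constructor <;> intro <;> linarith
  simp_rw [h1, hN, lintegral_zero]

lemma lintegral_scale (f : ℝ → ℝ≥0∞) (hf : Measurable f) {s : ℝ} (hs : 0 < s) :
    ∫⁻ x, f x = ENNReal.ofReal s * ∫⁻ u, f (s * u) := by
  have h1 : ∫⁻ u, f (s * u) = ∫⁻ x, f x ∂(Measure.map (s * ·) volume) :=
    (lintegral_map hf (measurable_const_mul s)).symm
  rw [h1, Real.map_volume_mul_left hs.ne', lintegral_smul_measure, smul_eq_mul, ← mul_assoc,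
    ← ENNReal.ofReal_mul hs.le, abs_of_pos (by positivity), mul_inv_cancel₀ hs.ne',
    ENNReal.ofReal_one, one_mul]

lemma gaussian_singleton (m : ℝ) {v : ℝ≥0} (hv : v ≠ 0) (x : ℝ) :
    gaussianReal m v {x} = 0 := by
  rw [gaussianReal_apply m hv, setLIntegral_measure_zero _ _ (measure_singleton x)]

lemma gaussian_Iic_strict_mono (m : ℝ) {v : ℝ≥0} (hv : v ≠ 0) {t1 t2 : ℝ} (h : t1 < t2) :
    gaussianReal m v (Iic t1) < gaussianReal m v (Iic t2) := by
  have hdecomp : Iic t1 ∪ Ioc t1 t2 = Iic t2 := Iic_union_Ioc_eq_Iic h.le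
  have hdisj : Disjoint (Iic t1) (Ioc t1 t2) := by
    simp only [Set.disjoint_left, mem_Iic, mem_Ioc]
    intro a ha h1; linarith [h1.1]
  have hpos : 0 < gaussianReal m v (Ioc t1 t2) := by
    rw [gaussianReal_apply m hv]
    rw [setLIntegral_pos_iff (measurable_gaussianPDF m v)]
    have hsupp : Function.support (gaussianPDF m v) = univ := by
      ext x; simp [Function.mem_support, (gaussianPDF_pos m hv x).ne']
    rw [hsupp, univ_inter, Real.volume_Ioc]
    simp [h]
  calc gaussianReal m v (Iic t1)
      < gaussianReal m v (Iic t1) + gaussianReal m v (Ioc t1 t2) :=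
        ENNReal.lt_add_right (measure_ne_top _ _) hpos.ne'
    _ = gaussianReal m v (Iic t2) := by
        rw [← measure_union hdisj measurableSet_Ioc, hdecomp]

lemma lintegral_strict_comparison {a r : ℝ} (ha : 0 < a) (hr : 0 < r)
    (m : ℝ) {v : ℝ≥0} (hv : v ≠ 0) {b b' : ℝ} (hb' : 0 < b') (hbb : b' < b) (t : ℝ) :
    ∫⁻ u, gammaPDF a r u * gaussianReal m v (Iic (t - b * u))
      < ∫⁻ u, gammaPDF a r u * gaussianReal m v (Iic (t - b' * u)) := by
  set N := gaussianReal m v with hN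
  have hIic : ∀ c : ℝ, (∫⁻ u in Iic 0, gammaPDF a r u * N (Iic (t - c * u))) = 0 := by
    intro c
    have h0 : (volume.restrict (Iic (0:ℝ))) {(0:ℝ)} = 0 := by
      refine le_antisymm (le_trans (Measure.le_iff'.1 (Measure.restrict_le_self) {0}) ?_)
        zero_le
      simp
    have hne0 : ∀ᵐ u ∂(volume.restrict (Iic (0:ℝ))), u ≠ 0 := by
      rw [ae_iff]; convert h0 using 2; ext u; simp
    have hz : ∀ᵐ u ∂(volume.restrict (Iic (0:ℝ))),
        gammaPDF a r u * N (Iic (t - c * u)) = 0 := by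
      filter_upwards [ae_restrict_mem measurableSet_Iic, hne0] with u hu hune
      rw [gammaPDF_of_neg (lt_of_le_of_ne hu hune), zero_mul]
    rw [lintegral_congr_ae hz, lintegral_zero]
  have hfin : ∫⁻ u in Ioi (0:ℝ), gammaPDF a r u * N (Iic (t - b * u)) ≠ ⊤ := by
    refine ne_top_of_le_ne_top (by simp : (1:ℝ≥0∞) ≠ ⊤) ?_
    calc ∫⁻ u in Ioi (0:ℝ), gammaPDF a r u * N (Iic (t - b * u))
        ≤ ∫⁻ u in Ioi (0:ℝ), gammaPDF a r u := by
          refine lintegral_mono fun u => ?_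
          calc gammaPDF a r u * N (Iic (t - b * u)) ≤ gammaPDF a r u * 1 := by
                gcongr; exact prob_le_one
            _ = gammaPDF a r u := mul_one _
      _ ≤ ∫⁻ u, gammaPDF a r u := setLIntegral_le_lintegral _ _
      _ = 1 := lintegral_gammaPDF_eq_one ha hr
  have hstrict : ∫⁻ u in Ioi (0:ℝ), gammaPDF a r u * N (Iic (t - b * u))
      < ∫⁻ u in Ioi (0:ℝ), gammaPDF a r u * N (Iic (t - b' * u)) := by
    refine lintegral_strict_mono ?_ ((measurable_gammaPDF' a r).mul
      (measurable_N_Iic N t b')).aemeasurable hfin ?_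
    · rw [Ne, Measure.restrict_eq_zero]
      simp [Real.volume_Ioi]
    · filter_upwards [ae_restrict_mem measurableSet_Ioi] with u hu
      have hpdfpos : 0 < gammaPDFReal a r u := gammaPDFReal_pos ha hr hu
      have hlt : N (Iic (t - b * u)) < N (Iic (t - b' * u)) :=
        gaussian_Iic_strict_mono m hv (by nlinarith [mem_Ioi.mp hu])
      exact (ENNReal.mul_lt_mul_iff_right (ENNReal.ofReal_pos.mpr hpdfpos).ne'
        ENNReal.ofReal_ne_top).mpr hlt
  calc ∫⁻ u, gammaPDF a r u * N (Iic (t - b * u))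
      = (∫⁻ u in Iic 0, gammaPDF a r u * N (Iic (t - b * u)))
        + ∫⁻ u in (Iic (0:ℝ))ᶜ, gammaPDF a r u * N (Iic (t - b * u)) :=
        (lintegral_add_compl _ measurableSet_Iic).symm
    _ = ∫⁻ u in Ioi (0:ℝ), gammaPDF a r u * N (Iic (t - b * u)) := by
        rw [hIic b, zero_add, compl_Iic]
    _ < ∫⁻ u in Ioi (0:ℝ), gammaPDF a r u * N (Iic (t - b' * u)) := hstrict
    _ = (∫⁻ u in Iic 0, gammaPDF a r u * N (Iic (t - b' * u)))
        + ∫⁻ u in (Iic (0:ℝ))ᶜ, gammaPDF a r u * N (Iic (t - b' * u)) := by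
        rw [hIic b', zero_add, compl_Iic]
    _ = ∫⁻ u, gammaPDF a r u * N (Iic (t - b' * u)) :=
        lintegral_add_compl _ measurableSet_Iic

/-! ### Quantile lemmas -/

lemma quantSet_nonempty (μ : Measure ℝ) [IsProbabilityMeasure μ] {ϱ : ℝ} (hϱ : ϱ < 1) :
    {t : ℝ | ENNReal.ofReal ϱ ≤ μ (Iic t)}.Nonempty := by
  have ht := tendsto_measure_Iic_atTop μ
  rw [measure_univ] at ht
  obtain ⟨t, ht'⟩ := (ht.eventually_const_lt (ENNReal.ofReal_lt_one.mpr hϱ)).exists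
  exact ⟨t, ht'.le⟩

lemma quantSet_bddBelow (μ : Measure ℝ) [IsProbabilityMeasure μ] {ϱ : ℝ} (hϱ : 0 < ϱ) :
    BddBelow {t : ℝ | ENNReal.ofReal ϱ ≤ μ (Iic t)} := by
  have htend : Tendsto (fun n : ℕ => μ (Iic (-(n : ℝ)))) atTop
      (𝓝 (μ (⋂ n : ℕ, Iic (-(n : ℝ))))) := by
    exact tendsto_measure_iInter_atTop (fun n => measurableSet_Iic.nullMeasurableSet)
      (fun i j hij => Iic_subset_Iic.mpr (neg_le_neg (Nat.cast_le.mpr hij)))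
      ⟨0, measure_ne_top _ _⟩
  have hempty : (⋂ n : ℕ, Iic (-(n : ℝ))) = ∅ := by
    ext x
    simp only [mem_iInter, mem_Iic, mem_empty_iff_false, iff_false, not_forall, not_le]
    obtain ⟨n, hn⟩ := exists_nat_gt (-x)
    exact ⟨n, by linarith⟩
  rw [hempty, measure_empty] at htend
  obtain ⟨n, hn⟩ := (htend.eventually_lt_const
    (show (0:ℝ≥0∞) < ENNReal.ofReal ϱ from ENNReal.ofReal_pos.mpr hϱ)).exists
  refine ⟨-(n : ℝ), fun x hx => ?_⟩
  by_contra hlt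
  push_neg at hlt
  exact absurd (le_trans hx (measure_mono (Iic_subset_Iic.mpr hlt.le))) (not_le.mpr hn)

lemma quantSet_mem (μ : Measure ℝ) [IsProbabilityMeasure μ] {ϱ : ℝ} (hϱ0 : 0 < ϱ) (hϱ1 : ϱ < 1) :
    ENNReal.ofReal ϱ ≤ μ (Iic (sInf {t : ℝ | ENNReal.ofReal ϱ ≤ μ (Iic t)})) := by
  set S := {t : ℝ | ENNReal.ofReal ϱ ≤ μ (Iic t)} with hS
  set q := sInf S with hq
  have hne := quantSet_nonempty μ hϱ1
  have hbdd := quantSet_bddBelow μ hϱ0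
  have hmem : ∀ n : ℕ, ENNReal.ofReal ϱ ≤ μ (Iic (q + 1 / (n + 1))) := by
    intro n
    have hlt : q < q + 1 / (n + 1) := lt_add_of_pos_right q (by positivity)
    obtain ⟨s, hsS, hs⟩ := (csInf_lt_iff hbdd hne).mp hlt
    exact le_trans hsS (measure_mono (Iic_subset_Iic.mpr hs.le))
  have htend : Tendsto (fun n : ℕ => μ (Iic (q + 1 / (n + 1)))) atTop
      (𝓝 (μ (⋂ n : ℕ, Iic (q + 1 / (n + 1))))) := by
    refine tendsto_measure_iInter_atTop (fun n => measurableSet_Iic.nullMeasurableSet)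
      (fun i j hij => Iic_subset_Iic.mpr ?_) ⟨0, measure_ne_top _ _⟩
    have : (1 : ℝ) / (j + 1) ≤ 1 / (i + 1) := by
      apply one_div_le_one_div_of_le (by positivity)
      exact add_le_add_left (Nat.cast_le.mpr hij) 1
    linarith
  have hinter : (⋂ n : ℕ, Iic (q + 1 / (n + 1))) = Iic q := by
    ext x
    simp only [mem_iInter, mem_Iic]
    constructor
    · intro h
      by_contra hx
      push_neg at hx
      obtain ⟨n, hn⟩ := exists_nat_one_div_lt (show (0:ℝ) < x - q by linarith)
      exact absurd (h n) (by linarith)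
    · intro h n
      have : (0:ℝ) < 1 / (n + 1) := by positivity
      linarith
  rw [hinter] at htend
  exact ge_of_tendsto htend (Eventually.of_forall hmem)

lemma quantile_strict_anti {μ μ' : Measure ℝ} [IsProbabilityMeasure μ] [IsProbabilityMeasure μ']
    {ϱ : ℝ} (hϱ0 : 0 < ϱ) (hϱ1 : ϱ < 1)
    (hcdf : ∀ t : ℝ, μ (Iic t) < μ' (Iic t))
    (hatom : ∀ x : ℝ, μ' {x} = 0) :
    sInf {t : ℝ | ENNReal.ofReal ϱ ≤ μ' (Iic t)}
      < sInf {t : ℝ | ENNReal.ofReal ϱ ≤ μ (Iic t)} := by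
  set q := sInf {t : ℝ | ENNReal.ofReal ϱ ≤ μ (Iic t)} with hq
  have h2 : ENNReal.ofReal ϱ < μ' (Iic q) :=
    lt_of_le_of_lt (quantSet_mem μ hϱ0 hϱ1) (hcdf q)
  have hIio : μ' (Iio q) = μ' (Iic q) := measure_congr (Iio_ae_eq_Iic' (hatom q))
  have htend : Tendsto (fun n : ℕ => μ' (Iic (q - 1 / (n + 1)))) atTop
      (𝓝 (μ' (⋃ n : ℕ, Iic (q - 1 / (n + 1))))) := by
    exact tendsto_measure_iUnion_atTop (fun i j hij => Iic_subset_Iic.mpr (by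
      have : (1 : ℝ) / (j + 1) ≤ 1 / (i + 1) :=
        one_div_le_one_div_of_le (by positivity)
          (add_le_add_left (Nat.cast_le.mpr hij) 1)
      linarith))
  have hunion : (⋃ n : ℕ, Iic (q - 1 / (n + 1))) = Iio q := by
    ext x
    simp only [mem_iUnion, mem_Iic, mem_Iio]
    constructor
    · rintro ⟨n, hn⟩
      have : (0:ℝ) < 1 / (n + 1) := by positivity
      linarith
    · intro hx
      obtain ⟨n, hn⟩ := exists_nat_one_div_lt (show (0:ℝ) < q - x by linarith)
      exact ⟨n, by linarith⟩
  rw [hunion, hIio] at htend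
  obtain ⟨n, hn⟩ := (htend.eventually_const_lt h2).exists
  calc sInf {t : ℝ | ENNReal.ofReal ϱ ≤ μ' (Iic t)} ≤ q - 1 / (n + 1) :=
        csInf_le (quantSet_bddBelow μ' hϱ0) hn.le
    _ < q := by
        have : (0:ℝ) < 1 / ((n:ℝ) + 1) := by positivity
        linarith

/-! ### Main probabilistic lemma -/

lemma latencyDistPC_isProb
    (ψ D κ ζ fb tp np ε Q : ℝ)
    (hD : 0 < D) (hκ : 0 < κ) (hψQ : 0 < Real.exp (ψ * Q) - Real.exp ψ)
    {f : ℝ} (hf : 0 < f) :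
    IsProbabilityMeasure (latencyDistPC ψ D κ ζ fb tp np ε f Q) := by
  haveI := isProbabilityMeasure_gammaMeasure hκ
    (show 0 < κ * f / ((Real.exp (ψ * Q) - Real.exp ψ) * D) from
      div_pos (mul_pos hκ hf) (mul_pos hψQ hD))
  exact Measure.isProbabilityMeasure_map
    (((measurable_fst.const_mul _).add measurable_snd).aemeasurable)

lemma latencyQuantilePC_strict_anti
    (ψ D κ ζ fb tp np ε ϱ Q : ℝ)
    (hψ : 0 < ψ) (hD : 0 < D) (hκ : 0 < κ) (hζ : 0 < ζ) (hfb : 0 < fb)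
    (htp : 0 < tp) (hnp : 0 < np) (hε : ε ∈ Ioo (0:ℝ) 1) (hϱ : ϱ ∈ Ioo (0:ℝ) 1)
    (hQ : 1 < Q) {f f' : ℝ} (hf : 0 < f) (hff' : f < f') :
    latencyQuantilePC ψ D κ ζ fb tp np ε ϱ f' Q
      < latencyQuantilePC ψ D κ ζ fb tp np ε ϱ f Q := by
  have hQ0 : (0:ℝ) < Q := lt_trans one_pos hQ
  have h1ε : (0:ℝ) < 1 - ε := by linarith [hε.2]
  have hε0 := hε.1
  have hk : 0 < Real.exp (ψ * Q) - Real.exp ψ := by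
    rw [sub_pos]
    exact Real.exp_lt_exp.mpr (by nlinarith)
  have hf' : 0 < f' := lt_trans hf hff'
  have hv : (Real.toNNReal ((D / (Q * np)) * tp ^ 2 * ε / (1 - ε) ^ 2)) ≠ 0 := by
    refine (Real.toNNReal_pos.mpr ?_).ne'
    positivity
  have hcdf : ∀ t : ℝ, latencyDistPC ψ D κ ζ fb tp np ε f Q (Iic t)
      < latencyDistPC ψ D κ ζ fb tp np ε f' Q (Iic t) := by
    intro t
    set k := Real.exp (ψ * Q) - Real.exp ψ with hkdef
    set N := gaussianReal ((D / (Q * np)) * tp / (1 - ε))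
        (Real.toNNReal ((D / (Q * np)) * tp ^ 2 * ε / (1 - ε) ^ 2)) with hNdef
    set Rf := κ * f / (k * D) with hRfdef
    set Rf' := κ * f' / (k * D) with hRf'def
    have hRf : 0 < Rf := div_pos (mul_pos hκ hf) (mul_pos hk hD)
    have hRf' : 0 < Rf' := div_pos (mul_pos hκ hf') (mul_pos hk hD)
    set s := f' / f with hsdef
    have hs : 0 < s := by positivity
    have hs1 : 1 < s := (one_lt_div hf).mpr hff'
    simp only [latencyDistPC, ← hNdef, ← hkdef, ← hRfdef, ← hRf'def]
    rw [cdf_formula, cdf_formula]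
    have hRfs : Rf * s = Rf' := by
      rw [hRfdef, hRf'def, hsdef]
      field_simp
    have hpoint : ∀ u, gammaPDF κ Rf' u * N (Iic (t - ((1 + ζ * f / fb) * s) * u))
        = ENNReal.ofReal s * (gammaPDF κ Rf (s * u)
            * N (Iic (t - (1 + ζ * f / fb) * (s * u)))) := by
      intro u
      rw [← hRfs, show t - ((1 + ζ * f / fb) * s) * u = t - (1 + ζ * f / fb) * (s * u) by ring]
      rw [gammaPDF, gammaPDF, gammaPDFReal_scale hRf hs, ENNReal.ofReal_mul hs.le, mul_assoc]
    have hmeas2 : Measurable fun u : ℝ => gammaPDF κ Rf (s * u)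
        * N (Iic (t - (1 + ζ * f / fb) * (s * u))) :=
      ((measurable_gammaPDF' κ Rf).mul (measurable_N_Iic N t (1 + ζ * f / fb))).comp
        (measurable_const_mul s)
    have hscale : ∫⁻ u, gammaPDF κ Rf u * N (Iic (t - (1 + ζ * f / fb) * u))
        = ∫⁻ u, gammaPDF κ Rf' u * N (Iic (t - ((1 + ζ * f / fb) * s) * u)) := by
      rw [lintegral_scale (fun x => gammaPDF κ Rf x * N (Iic (t - (1 + ζ * f / fb) * x)))
        ((measurable_gammaPDF' κ Rf).mul (measurable_N_Iic N t (1 + ζ * f / fb))) hs]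
      simp_rw [hpoint]
      rw [lintegral_const_mul _ hmeas2]
    rw [hscale]
    have hb'pos : 0 < 1 + ζ * f' / fb := by positivity
    have hcoef : (1 + ζ * f / fb) * s = f' / f + ζ * f' / fb := by
      rw [hsdef]; field_simp
    have hbb : 1 + ζ * f' / fb < (1 + ζ * f / fb) * s := by
      rw [hcoef]; linarith
    exact lintegral_strict_comparison hκ hRf' _ hv hb'pos hbb t
  have hatom : ∀ x : ℝ, latencyDistPC ψ D κ ζ fb tp np ε f' Q {x} = 0 := by
    intro x
    rw [latencyDistPC]
    exact singleton_formula _ _ _ _ (gaussian_singleton _ hv) x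
  haveI := latencyDistPC_isProb ψ D κ ζ fb tp np ε Q hD hκ hk hf
  haveI := latencyDistPC_isProb ψ D κ ζ fb tp np ε Q hD hκ hk hf'
  exact quantile_strict_anti hϱ.1 hϱ.2 hcdf hatom

/-- **Lemma 1 (paper):** at any optimal pair `(f*, Q*)` of the power-constrained
latency-minimization problem with `Q* > 1`, either `f* = f_max` or the energy
constraint is met with equality, in which case
`f* = √((E_max − D/((1−ε) Q* η)) f_max³ / ((e^{ψQ*} − e^{ψ}) D P_max))`. -/
theorem energy_constraint_tight_at_optimum
    (ψ D Pmax fmax κ ζ fb tp np η ε ϱ Qmax Emax : ℝ)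
    (hψ : 0 < ψ) (hD : 0 < D) (hPmax : 0 < Pmax) (hfmax : 0 < fmax)
    (hκ : 0 < κ) (hζ : 0 < ζ) (hfb : 0 < fb) (htp : 0 < tp) (hnp : 0 < np)
    (hη : 0 < η) (hε : ε ∈ Ioo (0 : ℝ) 1) (hϱ : ϱ ∈ Ioo (0 : ℝ) 1)
    (hQmax : 1 < Qmax) (hEmax : 0 < Emax)
    (fstar Qstar : ℝ)
    (hfeas : 0 < fstar ∧ fstar ≤ fmax ∧ 1 ≤ Qstar ∧ Qstar ≤ Qmax ∧
      energyPC ψ D Pmax fmax η ε fstar Qstar ≤ Emax)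
    (hopt : ∀ f Q : ℝ, 0 < f → f ≤ fmax → 1 ≤ Q → Q ≤ Qmax →
      energyPC ψ D Pmax fmax η ε f Q ≤ Emax →
      latencyQuantilePC ψ D κ ζ fb tp np ε ϱ fstar Qstar ≤
        latencyQuantilePC ψ D κ ζ fb tp np ε ϱ f Q)
    (hQstar : 1 < Qstar) :
    fstar = fmax ∨
      (energyPC ψ D Pmax fmax η ε fstar Qstar = Emax ∧
        fstar = Real.sqrt ((Emax - D / ((1 - ε) * Qstar * η)) * fmax ^ 3 /
          ((Real.exp (ψ * Qstar) - Real.exp ψ) * D * Pmax))) := by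
  obtain ⟨hf0, hfle, hQ1, hQle, hEle⟩ := hfeas
  have h1ε : (0:ℝ) < 1 - ε := by linarith [hε.2]
  have hQ0 : (0:ℝ) < Qstar := lt_trans one_pos hQstar
  have hk : 0 < Real.exp (ψ * Qstar) - Real.exp ψ := by
    rw [sub_pos]
    exact Real.exp_lt_exp.mpr (by nlinarith)
  set k := Real.exp (ψ * Qstar) - Real.exp ψ with hkdef
  set A := Pmax * k * D / fmax ^ 3 with hAdef
  have hA : 0 < A := div_pos (mul_pos (mul_pos hPmax hk) hD) (pow_pos hfmax 3)
  set B := D / ((1 - ε) * Qstar * η) with hBdef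
  have hB : 0 < B := div_pos hD (mul_pos (mul_pos h1ε hQ0) hη)
  have henergy : ∀ f : ℝ, energyPC ψ D Pmax fmax η ε f Qstar = A * f ^ 2 + B := by
    intro f
    simp only [energyPC, ← hkdef, ← hBdef, hAdef]
    ring
  by_cases hffmax : fstar = fmax
  · exact Or.inl hffmax
  right
  have hltmax : fstar < fmax := lt_of_le_of_ne hfle hffmax
  have heq : energyPC ψ D Pmax fmax η ε fstar Qstar = Emax := by
    by_contra hne
    have hElt : A * fstar ^ 2 + B < Emax := by
      rw [← henergy]
      exact lt_of_le_of_ne hEle hne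
    have hEmB : 0 < Emax - B := by nlinarith [mul_nonneg hA.le (sq_nonneg fstar)]
    have hEBA : 0 < (Emax - B) / A := div_pos hEmB hA
    set f' := min fmax (Real.sqrt ((Emax - B) / A)) with hf'def
    have hf'pos : 0 < f' := lt_min hfmax (Real.sqrt_pos.mpr hEBA)
    have hsqgt : fstar < Real.sqrt ((Emax - B) / A) := by
      rw [show fstar = Real.sqrt (fstar ^ 2) from (Real.sqrt_sq hf0.le).symm]
      apply Real.sqrt_lt_sqrt (sq_nonneg fstar)
      rw [lt_div_iff₀ hA]
      nlinarith
    have hstar_lt : fstar < f' := lt_min hltmax hsqgt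
    have hE' : energyPC ψ D Pmax fmax η ε f' Qstar ≤ Emax := by
      rw [henergy]
      have h1 : f' ≤ Real.sqrt ((Emax - B) / A) := min_le_right _ _
      have h2 : f' ^ 2 ≤ (Emax - B) / A :=
        (pow_le_pow_left₀ hf'pos.le h1 2).trans_eq (Real.sq_sqrt hEBA.le)
      have h3 := (le_div_iff₀ hA).mp h2
      nlinarith [h3]
    have hle := hopt f' Qstar hf'pos (min_le_left _ _) hQ1 hQle hE'
    have hgt := latencyQuantilePC_strict_anti ψ D κ ζ fb tp np ε ϱ Qstar
      hψ hD hκ hζ hfb htp hnp hε hϱ hQstar hf0 hstar_lt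
    exact absurd hle (not_le.mpr hgt)
  refine ⟨heq, ?_⟩
  have hsq : fstar ^ 2 = (Emax - B) / A := by
    have h := heq
    rw [henergy] at h
    field_simp
    linarith [mul_comm A (fstar ^ 2)]
  have hx : (Emax - B) / A = (Emax - B) * fmax ^ 3 / (k * D * Pmax) := by
    rw [hAdef, div_div_eq_mul_div]
    ring
  rw [show fstar = Real.sqrt (fstar ^ 2) from (Real.sqrt_sq hf0.le).symm, hsq, hx]
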